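/- Let ξ be a white noise on R² (an isonormal Gaussian process on L²(R²)) and fix a wavelet basis {ψ^n_x : n ≥ 0, x ∈ Λ_n, ψ ∈ Ψ} ∪ {φ^0_x : x ∈ Λ_0} of L²(R²) with compactly supported C^r mother wavelets, where Λ_n = 2^{-n}Z². Then for every α < -1, a > 0 and p ∈ N with 2pa > 2 and 2p(α+1) < -2, one has E[ sup_{n ≥ 0} sup_{ψ ∈ Ψ} sup_{x ∈ Λ_n} ( |⟨ξ, ψ^n_x⟩| / (2^{-n(α+1)} (1+|x|)^a) )^{2p} ] < ∞; in particular the supremum is almost surely finite. -/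

import Mathlib

noncomputable section

open MeasureTheory ProbabilityTheory ENNReal

/-- The lattice point `2^{-n} k` in `ℝ²` (as an `ℓ²` vector). -/
def wnVnk (n : ℕ) (k : Fin 2 → ℤ) : WithLp 2 (Fin 2 → ℝ) :=
  (WithLp.equiv 2 (Fin 2 → ℝ)).symm (fun i => (2 : ℝ) ^ (-(n : ℤ)) * (k i : ℝ))

/-- The normalizing weight `2^{-n(α+1)} (1+|x|)^a`. -/
def wnCval (α a : ℝ) (n : ℕ) (k : Fin 2 → ℤ) : ℝ :=
  (2 : ℝ) ^ (-(n : ℝ) * (α + 1)) * (1 + ‖wnVnk n k‖) ^ a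

lemma wnCval_pos (α a : ℝ) (n : ℕ) (k : Fin 2 → ℤ) : 0 < wnCval α a n k := by
  have h : (0:ℝ) < 1 + ‖wnVnk n k‖ := by positivity
  unfold wnCval
  positivity

lemma gauss_moment (p : ℕ) : ∫⁻ x, (ENNReal.ofReal |x|) ^ (2*p) ∂(gaussianReal 0 1) < ⊤ := by
  rw [gaussianReal_of_var_ne_zero _ one_ne_zero]
  rw [lintegral_withDensity_eq_lintegral_mul _ (measurable_gaussianPDF _ _)
    ((continuous_abs.measurable.ennreal_ofReal.pow_const _) :
      Measurable fun x : ℝ => (ENNReal.ofReal |x|) ^ (2*p))]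
  have hInt : Integrable (fun x : ℝ => x ^ (2*p) * gaussianPDFReal 0 1 x) := by
    have h0 : Integrable (fun x : ℝ => x ^ ((2*p : ℕ) : ℝ) * Real.exp (-2⁻¹ * x^2)) :=
      integrable_rpow_mul_exp_neg_mul_sq (by norm_num)
        (lt_of_lt_of_le (by norm_num) (Nat.cast_nonneg _))
    simp only [Real.rpow_natCast] at h0
    have := h0.const_mul ((Real.sqrt (2 * Real.pi * 1))⁻¹)
    refine this.congr (Filter.Eventually.of_forall fun x => ?_)
    simp only [gaussianPDFReal]
    push_cast
    ring_nf
  have := hInt.lintegral_lt_top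
  refine lt_of_le_of_lt (le_of_eq ?_) this
  refine lintegral_congr fun x => ?_
  rw [Pi.mul_apply, gaussianPDF, ← ENNReal.ofReal_pow (abs_nonneg _),
    ← ENNReal.ofReal_mul (gaussianPDFReal_nonneg _ _ _)]
  rw [Even.pow_abs ⟨p, by ring⟩]
  congr 1
  ring

lemma wnZInt_lt_top {s : ℝ} (hs : 1 < s) :
    ∑' q : ℤ, ENNReal.ofReal ((1 + |(q : ℝ)|) ^ (-s)) < ⊤ := by
  have hnat : Summable (fun n : ℕ => (1 + (n : ℝ)) ^ (-s)) := by
    have h := (Real.summable_nat_rpow (p := -s)).mpr (by linarith)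
    have h' := (summable_nat_add_iff 1).mpr h
    refine h'.congr fun n => ?_
    push_cast
    ring_nf
  have hsum : Summable (fun q : ℤ => (1 + |(q : ℝ)|) ^ (-s)) := by
    refine Summable.of_nat_of_neg ?_ ?_
    · refine hnat.congr fun n => ?_; simp
    · refine hnat.congr fun n => ?_; simp
  rw [← ENNReal.ofReal_tsum_of_nonneg (fun q => by positivity) hsum]
  exact ENNReal.ofReal_lt_top

lemma wn_int_sum_block {s : ℝ} (hs : 1 < s) (N : ℕ) [NeZero N] :
    ∑' j : ℤ, ENNReal.ofReal ((1 + |(j : ℝ)| / (N : ℝ)) ^ (-s)) ≤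
      (N : ℝ≥0∞) * ENNReal.ofReal ((2 : ℝ) ^ s) *
        ∑' q : ℤ, ENNReal.ofReal ((1 + |(q : ℝ)|) ^ (-s)) := by
  have hN : (0:ℝ) < N := by exact_mod_cast Nat.pos_of_ne_zero (NeZero.ne N)
  have hterm : ∀ j : ℤ, ENNReal.ofReal ((1 + |(j : ℝ)| / (N : ℝ)) ^ (-s)) ≤
      ENNReal.ofReal ((2 : ℝ) ^ s) * ENNReal.ofReal ((1 + |((j / (N:ℤ) : ℤ) : ℝ)|) ^ (-s)) := by
    intro j
    set q : ℤ := j / (N : ℤ) with hq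
    have hkey : (1 + |(q : ℝ)|) / 2 ≤ 1 + |(j : ℝ)| / N := by
      have h1 : |((N : ℤ) * q : ℤ)| ≤ |j| + N := by
        have hmod : (N : ℤ) * q + j % (N : ℤ) = j := by rw [hq, Int.emod_def]; ring
        have hr0 : 0 ≤ j % (N : ℤ) := Int.emod_nonneg j (by exact_mod_cast (NeZero.ne N))
        have hrN : j % (N : ℤ) < N :=
          Int.emod_lt_of_pos j (by exact_mod_cast Nat.pos_of_ne_zero (NeZero.ne N))
        calc |(N : ℤ) * q| = |j - j % (N:ℤ)| := by congr 1; omega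
        _ ≤ |j| + |j % (N:ℤ)| := abs_sub _ _
        _ ≤ |j| + N := by rw [abs_of_nonneg hr0]; omega
      have h1' : (N : ℝ) * |(q : ℝ)| ≤ |(j : ℝ)| + N := by
        calc (N:ℝ) * |(q:ℝ)| = |(N:ℝ) * (q:ℝ)| := by rw [abs_mul, abs_of_pos hN]
        _ ≤ |(j:ℝ)| + N := by
            have : ((|((N:ℤ) * q)| : ℤ) : ℝ) ≤ ((|j| + N : ℤ) : ℝ) := by exact_mod_cast h1
            push_cast at this
            convert this using 2 <;> push_cast <;> ring
      have hqle : |(q : ℝ)| ≤ 1 + |(j : ℝ)| / N := by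
        rw [show (1 + |(j:ℝ)|/N) = (|(j:ℝ)| + N)/N by field_simp; ring, le_div_iff₀ hN]
        nlinarith [abs_nonneg (j:ℝ), abs_nonneg (q:ℝ)]
      nlinarith [abs_nonneg (j:ℝ), div_nonneg (abs_nonneg (j:ℝ)) hN.le]
    have hpos : (0:ℝ) < (1 + |(q : ℝ)|) / 2 := by positivity
    have hmono := Real.rpow_le_rpow_of_nonpos hpos hkey (neg_nonpos.mpr (by linarith : (0:ℝ) ≤ s))
    rw [← ENNReal.ofReal_mul (by positivity)]
    refine le_trans (ENNReal.ofReal_le_ofReal hmono) (ENNReal.ofReal_le_ofReal (le_of_eq ?_))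
    rw [Real.div_rpow (by positivity) (by norm_num), Real.rpow_neg (by norm_num : (0:ℝ) ≤ 2)]
    field_simp
  calc ∑' j : ℤ, ENNReal.ofReal ((1 + |(j : ℝ)| / (N : ℝ)) ^ (-s))
      ≤ ∑' j : ℤ, ENNReal.ofReal ((2:ℝ) ^ s) *
          ENNReal.ofReal ((1 + |((j / (N:ℤ) : ℤ) : ℝ)|) ^ (-s)) := ENNReal.tsum_le_tsum hterm
    _ = (N : ℝ≥0∞) * ENNReal.ofReal ((2 : ℝ) ^ s) *
        ∑' q : ℤ, ENNReal.ofReal ((1 + |(q : ℝ)|) ^ (-s)) := by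
        rw [ENNReal.tsum_mul_left]
        have hre : ∑' (j : ℤ), ENNReal.ofReal ((1 + |((j / (N:ℤ) : ℤ) : ℝ)|) ^ (-s))
            = ∑' (x : ℤ × Fin N), ENNReal.ofReal ((1 + |((x.1 : ℤ) : ℝ)|) ^ (-s)) :=
          Equiv.tsum_eq (Int.divModEquiv N)
            (fun x : ℤ × Fin N => ENNReal.ofReal ((1 + |((x.1 : ℤ) : ℝ)|) ^ (-s)))
        rw [hre, ENNReal.tsum_prod']
        simp only [tsum_fintype, Finset.sum_const, Finset.card_univ, Fintype.card_fin,
          nsmul_eq_mul]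
        rw [ENNReal.tsum_mul_left]
        ring

lemma wn_coord_le_norm (v : Fin 2 → ℝ) (i : Fin 2) :
    |v i| ≤ ‖(WithLp.equiv 2 (Fin 2 → ℝ)).symm v‖ := by
  have h := EuclideanSpace.norm_eq ((WithLp.equiv 2 (Fin 2 → ℝ)).symm v)
  rw [h, show |v i| = Real.sqrt ((v i)^2) from (Real.sqrt_sq_eq_abs _).symm]
  apply Real.sqrt_le_sqrt
  have hco : ∀ j, ‖(WithLp.equiv 2 (Fin 2 → ℝ)).symm v j‖ = |v j| := fun j => rfl
  simp only [hco, Fin.sum_univ_two]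
  fin_cases i <;> simp [sq_abs] <;> positivity

lemma wn_sum2d (s : ℝ) (hs : 1 < s) (n : ℕ) :
    ∑' k : Fin 2 → ℤ, ENNReal.ofReal ((1 + ‖wnVnk n k‖) ^ (-(2*s))) ≤
      (∑' j : ℤ, ENNReal.ofReal ((1 + |(j:ℝ)| / ((2^(n+1) : ℕ) : ℝ)) ^ (-s)))^2 := by
  set N : ℕ := 2^(n+1) with hNdef
  set g : ℤ → ℝ≥0∞ := fun j => ENNReal.ofReal ((1 + |(j:ℝ)| / (N : ℝ)) ^ (-s)) with hg
  have hpt : ∀ k : Fin 2 → ℤ,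
      ENNReal.ofReal ((1 + ‖wnVnk n k‖) ^ (-(2*s))) ≤ g (k 0) * g (k 1) := by
    intro k
    set v : Fin 2 → ℝ := fun i => (2:ℝ)^(-(n:ℤ)) * (k i : ℝ) with hv
    have hVv : wnVnk n k = (WithLp.equiv 2 (Fin 2 → ℝ)).symm v := rfl
    set B : ℝ := 1 + ‖(WithLp.equiv 2 (Fin 2 → ℝ)).symm v‖ with hB
    have hB1 : (1:ℝ) ≤ B := by
      have := norm_nonneg ((WithLp.equiv 2 (Fin 2 → ℝ)).symm v); rw [hB]; linarith
    have hcoord : ∀ i : Fin 2, 1 + |(k i : ℝ)| / (N : ℝ) ≤ B := by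
      intro i
      have h1 := wn_coord_le_norm v i
      have h2 : |(k i : ℝ)| / (N : ℝ) ≤ |v i| := by
        rw [hv]
        simp only [abs_mul, abs_of_pos (zpow_pos (by norm_num : (0:ℝ) < 2) _)]
        rw [div_le_iff₀ (by positivity : (0:ℝ) < (N:ℝ))]
        have hNval : ((N:ℕ):ℝ) = (2:ℝ)^((n+1:ℕ):ℤ) := by
          rw [hNdef, zpow_natCast]; push_cast; ring
        rw [mul_comm ((2:ℝ)^(-(n:ℤ))) _, mul_assoc, hNval,
          ← zpow_add₀ (by norm_num : (2:ℝ) ≠ 0)]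
        have : (-(n:ℤ) + (n+1:ℕ)) = (1:ℤ) := by push_cast; ring
        rw [this]
        nlinarith [abs_nonneg ((k i : ℝ))]
      rw [hB]; linarith [h2.trans h1]
    have hprod : (1 + |(k 0 : ℝ)| / (N : ℝ)) * (1 + |(k 1 : ℝ)| / (N : ℝ)) ≤ B^2 := by
      have h0 := hcoord 0; have h1 := hcoord 1
      have e0 : (0:ℝ) ≤ 1 + |(k 0 : ℝ)| / (N : ℝ) := by positivity
      have e1 : (0:ℝ) ≤ 1 + |(k 1 : ℝ)| / (N : ℝ) := by positivity
      nlinarith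
    have hBpow : B ^ (-(2*s)) = (B^2) ^ (-s) := by
      rw [← Real.rpow_natCast B 2, ← Real.rpow_mul (by linarith : (0:ℝ) ≤ B)]
      norm_num
    have hmono : (B^2) ^ (-s) ≤
        ((1 + |(k 0 : ℝ)| / (N : ℝ)) * (1 + |(k 1 : ℝ)| / (N : ℝ))) ^ (-s) :=
      Real.rpow_le_rpow_of_nonpos (by positivity) hprod (neg_nonpos.mpr (by linarith))
    rw [hVv, ← hB, hBpow]
    refine le_trans (ENNReal.ofReal_le_ofReal hmono) (le_of_eq ?_)
    rw [Real.mul_rpow (by positivity) (by positivity), ENNReal.ofReal_mul (by positivity)]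
  refine le_trans (ENNReal.tsum_le_tsum hpt) (le_of_eq ?_)
  have hre : ∑' k : Fin 2 → ℤ, g (k 0) * g (k 1)
      = ∑' x : ℤ × ℤ, g x.1 * g x.2 :=
    Equiv.tsum_eq (piFinTwoEquiv (fun _ => ℤ)) (fun x : ℤ × ℤ => g x.1 * g x.2)
  rw [hre, ENNReal.tsum_prod']
  simp only [ENNReal.tsum_mul_left, ENNReal.tsum_mul_right]
  rw [sq]

lemma wn_per_term {Ω : Type*} [MeasurableSpace Ω] (P : Measure Ω) (X : Ω → ℝ)
    (hX : Measurable X) (hlaw : P.map X = gaussianReal 0 1) (c : ℝ) (hc : 0 < c) (m : ℕ) :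
    ∫⁻ ω, (ENNReal.ofReal (|X ω| / c)) ^ m ∂P =
      (ENNReal.ofReal c⁻¹) ^ m * ∫⁻ x, (ENNReal.ofReal |x|) ^ m ∂(gaussianReal 0 1) := by
  have h1 : ∀ ω, (ENNReal.ofReal (|X ω| / c)) ^ m =
      (ENNReal.ofReal c⁻¹) ^ m * (ENNReal.ofReal |X ω|) ^ m := by
    intro ω
    rw [div_eq_mul_inv, ENNReal.ofReal_mul (abs_nonneg _), mul_pow]
    ring
  simp_rw [h1]
  rw [lintegral_const_mul _ (hX.abs.ennreal_ofReal.pow_const m)]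
  congr 1
  rw [← hlaw, lintegral_map (continuous_abs.measurable.ennreal_ofReal.pow_const m) hX]

lemma wn_weight_eq (α a : ℝ) (p : ℕ) (n : ℕ) (k : Fin 2 → ℤ) :
    (ENNReal.ofReal (wnCval α a n k)⁻¹) ^ (2*p) =
      (ENNReal.ofReal ((2:ℝ) ^ ((α+1) * ((2*p : ℕ) : ℝ)))) ^ n *
        ENNReal.ofReal ((1 + ‖wnVnk n k‖) ^ (-(2 * ((p:ℝ) * a)))) := by
  have hBpos : (0:ℝ) < 1 + ‖wnVnk n k‖ := by positivity
  have hA : ((2:ℝ) ^ (-(n:ℝ) * (α+1)))⁻¹ = (2:ℝ) ^ ((n:ℝ) * (α+1)) := by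
    rw [show (-(n:ℝ) * (α+1)) = -((n:ℝ) * (α+1)) by ring,
      Real.rpow_neg (by norm_num : (0:ℝ) ≤ 2), inv_inv]
  have hreal : ((wnCval α a n k)⁻¹) ^ (2*p) =
      ((2:ℝ) ^ ((α+1) * ((2*p : ℕ) : ℝ))) ^ n * (1 + ‖wnVnk n k‖) ^ (-(2 * ((p:ℝ) * a))) := by
    unfold wnCval
    rw [mul_inv, mul_pow, hA]
    congr 1
    · rw [← Real.rpow_natCast ((2:ℝ) ^ ((n:ℝ) * (α+1))) (2*p),
        ← Real.rpow_mul (by norm_num : (0:ℝ) ≤ 2),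
        ← Real.rpow_natCast ((2:ℝ) ^ ((α+1) * ((2*p : ℕ) : ℝ))) n,
        ← Real.rpow_mul (by norm_num : (0:ℝ) ≤ 2)]
      ring_nf
    · rw [← Real.rpow_neg_one ((1 + ‖wnVnk n k‖) ^ a),
        ← Real.rpow_natCast (((1 + ‖wnVnk n k‖) ^ a) ^ (-1:ℝ)) (2*p),
        ← Real.rpow_mul (Real.rpow_nonneg hBpos.le _),
        ← Real.rpow_mul hBpos.le]
      push_cast
      ring_nf
  rw [← ENNReal.ofReal_pow (inv_nonneg.mpr (wnCval_pos α a n k).le), hreal,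
    ENNReal.ofReal_mul (by positivity), ENNReal.ofReal_pow (by positivity)]

/-- for white noise on `ℝ²` tested against an `L²`-normalized wavelet basis
`ψ^n_x`, `x ∈ Λ_n = 2^{-n}ℤ²`, `ψ` in a finite set `Ψ`, and for `α < -1`, `a > 0`, `p ∈ ℕ`
with `2pa > 2` and `2p(α+1) < -2`, the `2p`-th moment of
`sup_{n,ψ,x} |⟨ξ,ψ^n_x⟩| / (2^{-n(α+1)} (1+|x|)^a)` is finite; in particular the
supremum is a.s. finite.  The wavelet evaluations `⟨ξ,ψ^n_x⟩` (with `x = 2^{-n}k`) are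
encoded as random variables `X n ψ k`, each standard Gaussian since `‖ψ^n_x‖_{L²} = 1`. -/
theorem white_noise_wavelet_sup_moment
    (Ω : Type*) [MeasurableSpace Ω] (P : Measure Ω) [IsProbabilityMeasure P]
    (Ψ : Type*) [Fintype Ψ] [Nonempty Ψ]
    (X : ℕ → Ψ → (Fin 2 → ℤ) → Ω → ℝ)
    (hXmeas : ∀ n ψ k, Measurable (X n ψ k))
    (hXlaw : ∀ n ψ k, P.map (X n ψ k) = gaussianReal 0 1)
    (α a : ℝ) (hα : α < -1) (ha : 0 < a) (p : ℕ)
    (hp1 : 2 < 2 * (p : ℝ) * a) (hp2 : 2 * (p : ℝ) * (α + 1) < -2) :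
    (∫⁻ ω, ⨆ (n : ℕ) (ψ : Ψ) (k : Fin 2 → ℤ),
        (ENNReal.ofReal (|X n ψ k ω| /
          ((2 : ℝ) ^ (-(n : ℝ) * (α + 1)) *
            (1 + ‖(WithLp.equiv 2 (Fin 2 → ℝ)).symm
              (fun i => (2 : ℝ) ^ (-(n : ℤ)) * (k i : ℝ))‖) ^ a))) ^ (2 * p) ∂P) < ⊤ ∧
    ∀ᵐ ω ∂P, (⨆ (n : ℕ) (ψ : Ψ) (k : Fin 2 → ℤ),
        ENNReal.ofReal (|X n ψ k ω| /
          ((2 : ℝ) ^ (-(n : ℝ) * (α + 1)) *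
            (1 + ‖(WithLp.equiv 2 (Fin 2 → ℝ)).symm
              (fun i => (2 : ℝ) ^ (-(n : ℤ)) * (k i : ℝ))‖) ^ a))) < ⊤ := by
  have hp0 : p ≠ 0 := by rintro rfl; norm_num at hp1
  set s : ℝ := (p:ℝ) * a with hsdef
  have hs : 1 < s := by nlinarith
  -- the goal, rephrased through `wnCval`
  have hC : ∀ (n : ℕ) (k : Fin 2 → ℤ),
      (2 : ℝ) ^ (-(n : ℝ) * (α + 1)) *
        (1 + ‖(WithLp.equiv 2 (Fin 2 → ℝ)).symm
          (fun i => (2 : ℝ) ^ (-(n : ℤ)) * (k i : ℝ))‖) ^ a = wnCval α a n k := fun n k => rfl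
  simp only [hC]
  set F : ℕ → Ψ → (Fin 2 → ℤ) → Ω → ℝ≥0∞ :=
    fun n ψ k ω => (ENNReal.ofReal (|X n ψ k ω| / wnCval α a n k)) ^ (2*p) with hF
  have hFmeas : ∀ n ψ k, Measurable (F n ψ k) := fun n ψ k =>
    ((continuous_abs.measurable.comp (hXmeas n ψ k)).div_const _).ennreal_ofReal.pow_const _
  set M : ℝ≥0∞ := ∫⁻ x, (ENNReal.ofReal |x|) ^ (2*p) ∂(gaussianReal 0 1) with hM
  set Z : ℝ≥0∞ := ∑' q : ℤ, ENNReal.ofReal ((1 + |(q : ℝ)|) ^ (-s)) with hZ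
  set r : ℝ≥0∞ := ENNReal.ofReal ((2:ℝ) ^ ((α+1) * ((2*p : ℕ) : ℝ))) with hr
  -- per (n, ψ) bound on the sum over k
  have hksum : ∀ (n : ℕ) (ψ : Ψ),
      ∑' k : Fin 2 → ℤ, ∫⁻ ω, F n ψ k ω ∂P ≤
        r ^ n * 4^n * (4 * (ENNReal.ofReal ((2:ℝ)^s) * Z)^2 * M) := by
    intro n ψ
    have hNZ : NeZero (2^(n+1) : ℕ) := ⟨by positivity⟩
    calc ∑' k : Fin 2 → ℤ, ∫⁻ ω, F n ψ k ω ∂P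
        = ∑' k : Fin 2 → ℤ, (ENNReal.ofReal (wnCval α a n k)⁻¹) ^ (2*p) * M := by
          refine tsum_congr fun k => ?_
          exact wn_per_term P (X n ψ k) (hXmeas n ψ k) (hXlaw n ψ k) _ (wnCval_pos α a n k) _
      _ = r ^ n * ((∑' k : Fin 2 → ℤ,
            ENNReal.ofReal ((1 + ‖wnVnk n k‖) ^ (-(2 * s)))) * M) := by
          simp_rw [wn_weight_eq α a p n, hsdef]
          rw [ENNReal.tsum_mul_right, ENNReal.tsum_mul_left]
          ring
      _ ≤ r ^ n * (((((2^(n+1) : ℕ) : ℝ≥0∞) * ENNReal.ofReal ((2:ℝ)^s) * Z)^2) * M) := by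
          gcongr
          refine le_trans (wn_sum2d s hs n) ?_
          gcongr
          exact wn_int_sum_block hs (2^(n+1))
      _ = r ^ n * 4^n * (4 * (ENNReal.ofReal ((2:ℝ)^s) * Z)^2 * M) := by
          have h2 : ((2^(n+1) : ℕ) : ℝ≥0∞) = 2^(n+1) := by push_cast; ring
          rw [h2]
          have h4 : ((2:ℝ≥0∞)^(n+1))^2 = 4^n * 4 := by
            rw [← pow_mul, show (4:ℝ≥0∞) = 2^2 by norm_num, ← pow_mul, ← pow_add]
            ring_nf
          rw [mul_pow, mul_pow, h4]
          ring
  -- geometric ratio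
  have hr4 : r * 4 < 1 := by
    have h4 : (4:ℝ≥0∞) = ENNReal.ofReal ((2:ℝ)^(2:ℝ)) := by
      rw [show ((2:ℝ):ℝ) = ((2:ℕ):ℝ) by norm_num, Real.rpow_natCast]
      norm_num
    rw [hr, h4, ← ENNReal.ofReal_mul (by positivity),
      ← Real.rpow_add (by norm_num : (0:ℝ) < 2)]
    rw [ENNReal.ofReal_lt_one]
    apply Real.rpow_lt_one_of_one_lt_of_neg (by norm_num)
    push_cast
    nlinarith
  -- the total sum is finite
  have htot : ∑' (i : ℕ × Ψ × (Fin 2 → ℤ)), ∫⁻ ω, F i.1 i.2.1 i.2.2 ω ∂P < ⊤ := by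
    rw [ENNReal.tsum_prod']
    have hn : ∀ n : ℕ, ∑' (q : Ψ × (Fin 2 → ℤ)), ∫⁻ ω, F n q.1 q.2 ω ∂P ≤
        (Fintype.card Ψ : ℝ≥0∞) * ((r*4) ^ n * (4 * (ENNReal.ofReal ((2:ℝ)^s) * Z)^2 * M)) := by
      intro n
      rw [ENNReal.tsum_prod', tsum_fintype]
      calc ∑ ψ : Ψ, ∑' k : Fin 2 → ℤ, ∫⁻ ω, F n ψ k ω ∂P
          ≤ ∑ _ψ : Ψ, r ^ n * 4^n * (4 * (ENNReal.ofReal ((2:ℝ)^s) * Z)^2 * M) :=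
            Finset.sum_le_sum fun ψ _ => hksum n ψ
        _ = (Fintype.card Ψ : ℝ≥0∞) *
            ((r*4) ^ n * (4 * (ENNReal.ofReal ((2:ℝ)^s) * Z)^2 * M)) := by
            rw [Finset.sum_const, Finset.card_univ, nsmul_eq_mul, mul_pow]
            ring
    refine lt_of_le_of_lt (ENNReal.tsum_le_tsum hn) ?_
    rw [ENNReal.tsum_mul_left]
    simp_rw [ENNReal.tsum_mul_right]
    rw [ENNReal.tsum_geometric]
    have hZfin : Z < ⊤ := wnZInt_lt_top hs
    have hMfin : M < ⊤ := gauss_moment p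
    have hgeo : (1 - r*4)⁻¹ < ⊤ := by
      rw [ENNReal.inv_lt_top]
      exact tsub_pos_of_lt hr4
    have hD2 : (ENNReal.ofReal ((2:ℝ)^s) * Z)^2 < ⊤ :=
      ENNReal.pow_lt_top (ENNReal.mul_lt_top ENNReal.ofReal_lt_top hZfin)
    have h1 : 4 * (ENNReal.ofReal ((2:ℝ)^s) * Z)^2 * M < ⊤ :=
      ENNReal.mul_lt_top (ENNReal.mul_lt_top (by norm_num) hD2) hMfin
    exact ENNReal.mul_lt_top (ENNReal.natCast_lt_top _) (ENNReal.mul_lt_top hgeo h1)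
  -- first part
  have key : (∫⁻ ω, ⨆ (n : ℕ) (ψ : Ψ) (k : Fin 2 → ℤ), F n ψ k ω ∂P) < ⊤ := by
    refine lt_of_le_of_lt ?_ htot
    refine le_trans (lintegral_mono fun ω => ?_)
      (le_of_eq (lintegral_tsum fun i => (hFmeas i.1 i.2.1 i.2.2).aemeasurable))
    exact iSup_le fun n => iSup_le fun ψ => iSup_le fun k =>
      ENNReal.le_tsum (⟨n, ψ, k⟩ : ℕ × Ψ × (Fin 2 → ℤ))
  have hGmeas : Measurable fun ω => ⨆ (n : ℕ) (ψ : Ψ) (k : Fin 2 → ℤ), F n ψ k ω :=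
    Measurable.iSup fun n => Measurable.iSup fun ψ => Measurable.iSup fun k => hFmeas n ψ k
  refine ⟨key, ?_⟩
  filter_upwards [ae_lt_top hGmeas key.ne] with ω hω
  have hbound : (⨆ (n : ℕ) (ψ : Ψ) (k : Fin 2 → ℤ),
      ENNReal.ofReal (|X n ψ k ω| / wnCval α a n k)) ≤
      1 + ⨆ (n : ℕ) (ψ : Ψ) (k : Fin 2 → ℤ), F n ψ k ω := by
    refine iSup_le fun n => iSup_le fun ψ => iSup_le fun k => ?_
    rcases le_or_gt (ENNReal.ofReal (|X n ψ k ω| / wnCval α a n k)) 1 with h | h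
    · exact le_trans h le_self_add
    · refine le_trans (le_self_pow h.le (by omega : 2*p ≠ 0)) ?_
      refine le_trans ?_ le_add_self
      exact le_iSup_of_le n (le_iSup_of_le ψ (le_iSup_of_le k le_rfl))
  exact lt_of_le_of_lt hbound (by
    exact ENNReal.add_lt_top.mpr ⟨ENNReal.one_lt_top, hω⟩)
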